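/- Suppose n₁, n₂, n₃ are unit vectors in ℝ³ that are linearly dependent. Then there exists a unit vector n such that the great circle {x ∈ S² : x·n = 0} meets the interior of every one of the (open) regions into which the three great circles with normals n₁, n₂, n₃ divide S²; equivalently, there is a great circle intersecting every connected component of S² \ (γ₁ ∪ γ₂ ∪ γ₃), where γᵢ = {x ∈ S² : x·nᵢ = 0}. -/

import Mathlib

theorem stmt_19 (n : Fin 3 → EuclideanSpace ℝ (Fin 3))
    (hn : ∀ i, ‖n i‖ = 1)
    (hdist : ∀ i j, i ≠ j → n i ≠ n j ∧ n i ≠ -(n j))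
    (hdep : ¬ LinearIndependent ℝ n)
    (U : Set (EuclideanSpace ℝ (Fin 3)))
    (hU : U = {x : EuclideanSpace ℝ (Fin 3) | ‖x‖ = 1} \
      (⋃ i, {x : EuclideanSpace ℝ (Fin 3) | ‖x‖ = 1 ∧ (inner ℝ x (n i) : ℝ) = 0})) :
    ∃ m : EuclideanSpace ℝ (Fin 3), ‖m‖ = 1 ∧
      ∀ x ∈ U, ∃ y ∈ connectedComponentIn U x, (inner ℝ y m : ℝ) = 0 := by
  classical
  set K := Submodule.span ℝ (Set.range n) with hK
  -- the orthogonal complement of the span is nontrivial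
  have hKne : Kᗮ ≠ ⊥ := by
    intro h
    apply hdep
    have hKtop : K = ⊤ := Submodule.orthogonal_eq_bot_iff.mp h
    refine linearIndependent_of_top_le_span_of_card_eq_finrank ?_ ?_
    · rw [← hK, hKtop]
    · simp [finrank_euclideanSpace]
  obtain ⟨p₀, hp₀K, hp₀ne⟩ := (Submodule.ne_bot_iff _).mp hKne
  set p : EuclideanSpace ℝ (Fin 3) := ‖p₀‖⁻¹ • p₀ with hpdef
  have hpnorm : ‖p‖ = 1 := norm_smul_inv_norm (𝕜 := ℝ) hp₀ne
  have hpn : ∀ i, (inner ℝ (n i) p : ℝ) = 0 := by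
    intro i
    have h0 : (inner ℝ (n i) p₀ : ℝ) = 0 :=
      (Submodule.mem_orthogonal K p₀).mp hp₀K (n i)
        (Submodule.subset_span ⟨i, rfl⟩)
    rw [hpdef, inner_smul_right, h0, mul_zero]
  have hnp : ∀ i, (inner ℝ p (n i) : ℝ) = 0 := fun i => by
    rw [real_inner_comm]; exact hpn i
  refine ⟨p, hpnorm, ?_⟩
  intro x hx
  rw [hU] at hx
  obtain ⟨hx1, hx2⟩ := hx
  simp only [Set.mem_setOf_eq] at hx1
  have hxn : ∀ i, (inner ℝ x (n i) : ℝ) ≠ 0 := by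
    intro i hzero
    exact hx2 (Set.mem_iUnion.mpr ⟨i, ⟨hx1, hzero⟩⟩)
  set a : ℝ := inner ℝ x p with ha
  set w : EuclideanSpace ℝ (Fin 3) := x - a • p with hw
  have hpp : (inner ℝ p p : ℝ) = 1 := by
    rw [real_inner_self_eq_norm_sq, hpnorm]; norm_num
  have hwp : (inner ℝ w p : ℝ) = 0 := by
    rw [hw, inner_sub_left, real_inner_smul_left, hpp, ← ha]; ring
  have hwni : ∀ i, (inner ℝ w (n i) : ℝ) = inner ℝ x (n i) := by
    intro i
    rw [hw, inner_sub_left, real_inner_smul_left, hnp i]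
    ring
  -- the path
  set g : ℝ → EuclideanSpace ℝ (Fin 3) := fun t => ((1 - t) * a) • p + w with hg
  have hgn : ∀ t i, (inner ℝ (g t) (n i) : ℝ) = inner ℝ x (n i) := by
    intro t i
    rw [hg]
    simp only [inner_add_left, real_inner_smul_left, hnp i, hwni i]
    ring
  have hgne : ∀ t, g t ≠ 0 := by
    intro t h0
    apply hxn 0
    rw [← hgn t 0, h0, inner_zero_left]
  set f : ℝ → EuclideanSpace ℝ (Fin 3) := fun t => (‖g t‖)⁻¹ • g t with hf
  have hgcont : Continuous g := by
    apply Continuous.add _ continuous_const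
    exact (continuous_const.sub continuous_id).mul continuous_const |>.smul
      continuous_const
  have hfcont : Continuous f := by
    show Continuous (fun t => (‖g t‖)⁻¹ • g t)
    refine Continuous.smul (M := ℝ) ?_ hgcont
    exact (hgcont.norm).inv₀ (fun t => norm_ne_zero_iff.mpr (hgne t))
  have hfU : ∀ t, f t ∈ U := by
    intro t
    rw [hU]
    constructor
    · exact norm_smul_inv_norm (𝕜 := ℝ) (hgne t)
    · intro hmem
      obtain ⟨i, _, hzero⟩ := Set.mem_iUnion.mp hmem
      apply hxn i
      rw [← hgn t i]
      have : (inner ℝ (f t) (n i) : ℝ) = (‖g t‖)⁻¹ * inner ℝ (g t) (n i) :=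
        real_inner_smul_left (g t) (n i) (‖g t‖)⁻¹
      rw [this] at hzero
      rcases mul_eq_zero.mp hzero with h | h
      · exact absurd (inv_eq_zero.mp h) (norm_ne_zero_iff.mpr (hgne t))
      · exact h
  have hg0 : g 0 = x := by
    rw [hg]; simp [hw]
  have hf0 : f 0 = x := by
    rw [hf]; simp only [hg0, hx1]; norm_num
  have hwne : w ≠ 0 := by
    intro h0
    apply hxn 0
    rw [← hwni 0, h0, inner_zero_left]
  have hg1 : g 1 = w := by rw [hg]; simp
  -- image of ℝ under f is a connected subset of U containing x
  have hconn : IsPreconnected (f '' Set.univ) :=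
    isPreconnected_univ.image f hfcont.continuousOn
  have hsub : f '' Set.univ ⊆ connectedComponentIn U x := by
    refine hconn.subset_connectedComponentIn ?_ ?_
    · exact ⟨0, Set.mem_univ 0, hf0⟩
    · rintro z ⟨t, -, rfl⟩; exact hfU t
  refine ⟨f 1, hsub ⟨1, Set.mem_univ 1, rfl⟩, ?_⟩
  rw [hf]
  simp only [hg1, real_inner_smul_left, hwp, mul_zero]
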